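/- Let H be a Hopf *-algebra with invertible antipode and B a braided-commutative *-algebra in right H-crossed modules with unitary action and coaction. Then the map ⊛: B ⊗ H → H ⊗ B, (a ⊗ h)^⊛ = S⁻¹(h*) ⊗ a*, is an antilinear anti-algebra map from the smash product B # H^{op} to H # B: ((a⊗h)(b⊗g))^⊛ = (b⊗g)^⊛ (a⊗h)^⊛. -/

import Mathlib

open TensorProduct

noncomputable section

variable (H : Type) [Ring H] [HopfAlgebra ℂ H] [StarRing H] [StarModule ℂ H]
variable (B : Type) [Ring B] [Algebra ℂ B] [StarRing B] [StarModule ℂ B]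
variable (act : B ⊗[ℂ] H →ₗ[ℂ] B) (coact : B →ₗ[ℂ] B ⊗[ℂ] H)

/-- `(a ◁ h₂)₍₀₎ ⊗ h₁ · (a ◁ h₂)₍₁₎` for a right action `act` and right coaction `coact`. -/
def ydLHS (a : B) (h : H) : B ⊗[ℂ] H :=
  (TensorProduct.map (LinearMap.id : B →ₗ[ℂ] B) (LinearMap.mul' ℂ H))
    ((TensorProduct.assoc ℂ B H H)
      ((TensorProduct.map (TensorProduct.comm ℂ H B).toLinearMap (LinearMap.id : H →ₗ[ℂ] H))
        ((TensorProduct.assoc ℂ H B H).symm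
          ((TensorProduct.map (LinearMap.id : H →ₗ[ℂ] H)
              (coact ∘ₗ act ∘ₗ TensorProduct.mk ℂ B H a))
            (Coalgebra.comul (R := ℂ) h)))))

/-- `a₍₀₎ ◁ h₁ ⊗ a₍₁₎ · h₂`. -/
def ydRHS (a : B) (h : H) : B ⊗[ℂ] H :=
  (TensorProduct.map act (LinearMap.mul' ℂ H))
    ((TensorProduct.tensorTensorTensorComm ℂ B H H H)
      (coact a ⊗ₜ[ℂ] Coalgebra.comul (R := ℂ) h))

/-- Smash product multiplication `(a⊗h)(b⊗g) = a(b ◁ h₁) ⊗ g h₂` on `B # H^{op}`. -/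
def smashMul : (B ⊗[ℂ] H) ⊗[ℂ] (B ⊗[ℂ] H) →ₗ[ℂ] B ⊗[ℂ] H :=
  (TensorProduct.map
      (LinearMap.mul' ℂ B ∘ₗ TensorProduct.map (LinearMap.id : B →ₗ[ℂ] B) act)
      (LinearMap.mul' ℂ H ∘ₗ (TensorProduct.comm ℂ H H).toLinearMap)) ∘ₗ
  (TensorProduct.map (TensorProduct.assoc ℂ B B H).toLinearMap
      (LinearMap.id : H ⊗[ℂ] H →ₗ[ℂ] H ⊗[ℂ] H)) ∘ₗ
  (TensorProduct.assoc ℂ (B ⊗[ℂ] B) H (H ⊗[ℂ] H)).symm.toLinearMap ∘ₗ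
  (TensorProduct.map (LinearMap.id : B ⊗[ℂ] B →ₗ[ℂ] B ⊗[ℂ] B)
      (TensorProduct.assoc ℂ H H H).toLinearMap) ∘ₗ
  (TensorProduct.map (LinearMap.id : B ⊗[ℂ] B →ₗ[ℂ] B ⊗[ℂ] B)
      (TensorProduct.map (Coalgebra.comul (R := ℂ)) (LinearMap.id : H →ₗ[ℂ] H))) ∘ₗ
  (TensorProduct.tensorTensorTensorComm ℂ B H B H).toLinearMap

/-- Smash product multiplication on `H # B`: `(h⊗a)(g⊗b) = h g₁ ⊗ (a ◁ g₂) b`. -/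
def smashMulR : (H ⊗[ℂ] B) ⊗[ℂ] (H ⊗[ℂ] B) →ₗ[ℂ] H ⊗[ℂ] B :=
  (TensorProduct.map (LinearMap.mul' ℂ H)
      (LinearMap.mul' ℂ B ∘ₗ
        (TensorProduct.map act (LinearMap.id : B →ₗ[ℂ] B)) ∘ₗ
        (TensorProduct.map (TensorProduct.comm ℂ H B).toLinearMap (LinearMap.id : B →ₗ[ℂ] B)) ∘ₗ
        (TensorProduct.assoc ℂ H B B).symm.toLinearMap)) ∘ₗ
  (TensorProduct.assoc ℂ (H ⊗[ℂ] H) H (B ⊗[ℂ] B)).toLinearMap ∘ₗ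
  (TensorProduct.map (TensorProduct.assoc ℂ H H H).symm.toLinearMap
      (LinearMap.id : B ⊗[ℂ] B →ₗ[ℂ] B ⊗[ℂ] B)) ∘ₗ
  (TensorProduct.map (TensorProduct.map (LinearMap.id : H →ₗ[ℂ] H) (Coalgebra.comul (R := ℂ)))
      (LinearMap.id : B ⊗[ℂ] B →ₗ[ℂ] B ⊗[ℂ] B)) ∘ₗ
  (TensorProduct.tensorTensorTensorComm ℂ H B H B).toLinearMap


/-- The antilinear anti-algebra map `⊛ : B # H^{op} → H # B`,
`(a ⊗ h)^⊛ = S⁻¹(h*) ⊗ a*`, as a plain function. -/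
def circAst (Sinv : H →ₗ[ℂ] H) (sBH : B ⊗[ℂ] H → B ⊗[ℂ] H) (x : B ⊗[ℂ] H) : H ⊗[ℂ] B :=
  (TensorProduct.map Sinv (LinearMap.id : B →ₗ[ℂ] B))
    ((TensorProduct.comm ℂ B H) (sBH x))

section AuxConv
open Coalgebra HopfAlgebra

lemma addHom_sum {M N : Type} [AddCommMonoid M] [AddCommMonoid N] (f : M → N)
    (h0 : f 0 = 0) (hadd : ∀ u v, f (u + v) = f u + f v)
    {ι : Type*} (s : Finset ι) (v : ι → M) :
    f (∑ i ∈ s, v i) = ∑ i ∈ s, f (v i) := by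
  classical
  induction s using Finset.cons_induction with
  | empty => simpa using h0
  | cons i s hi ih => rw [Finset.sum_cons, hadd, ih, Finset.sum_cons]

variable {A : Type} [Ring A] [Algebra ℂ A] {C : Type} [AddCommGroup C] [Module ℂ C] [Coalgebra ℂ C]

def conv (f g : C →ₗ[ℂ] A) : C →ₗ[ℂ] A :=
  LinearMap.mul' ℂ A ∘ₗ TensorProduct.map f g ∘ₗ Coalgebra.comul

def convOne : C →ₗ[ℂ] A := Algebra.linearMap ℂ A ∘ₗ Coalgebra.counit

lemma conv_repr {ι : Type*} (f g : C →ₗ[ℂ] A) (x : C) (r : Coalgebra.Repr ℂ x ι) :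
    conv f g x = ∑ i ∈ r.index, f (r.left i) * g (r.right i) := by
  simp only [conv, LinearMap.comp_apply]
  rw [← r.eq]
  simp [map_sum]

lemma convOne_apply (x : C) : convOne (A := A) x = Coalgebra.counit (R := ℂ) x • 1 := by
  simp [convOne, Algebra.algebraMap_eq_smul_one]

lemma conv_convOne (f : C →ₗ[ℂ] A) : conv f convOne = f := by
  ext x
  obtain r := Coalgebra.Repr.arbitrary ℂ x
  rw [conv_repr f convOne x r]
  have h := congrArg (TensorProduct.rid ℂ C) (Coalgebra.sum_tmul_counit_eq r)
  simp only [map_sum, rid_tmul, rid_tmul] at h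
  calc ∑ i ∈ r.index, f (r.left i) * convOne (r.right i)
      = ∑ i ∈ r.index, Coalgebra.counit (R := ℂ) (r.right i) • f (r.left i) := by
        simp [convOne_apply, smul_smul]
    _ = f (∑ i ∈ r.index, Coalgebra.counit (R := ℂ) (r.right i) • r.left i) := by
        simp [map_sum]
    _ = f x := by rw [h]; simp

lemma convOne_conv (f : C →ₗ[ℂ] A) : conv convOne f = f := by
  ext x
  obtain r := Coalgebra.Repr.arbitrary ℂ x
  rw [conv_repr convOne f x r]
  have h := congrArg (TensorProduct.lid ℂ C) (Coalgebra.sum_counit_tmul_eq r)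
  simp only [map_sum, lid_tmul] at h
  calc ∑ i ∈ r.index, convOne (r.left i) * f (r.right i)
      = ∑ i ∈ r.index, Coalgebra.counit (R := ℂ) (r.left i) • f (r.right i) := by
        simp [convOne_apply, smul_smul]
    _ = f (∑ i ∈ r.index, Coalgebra.counit (R := ℂ) (r.left i) • r.right i) := by
        simp [map_sum]
    _ = f x := by rw [h]; simp

lemma conv_assoc (f g h : C →ₗ[ℂ] A) : conv (conv f g) h = conv f (conv g h) := by
  ext x
  obtain r := Coalgebra.Repr.arbitrary ℂ x
  set s : ∀ i, Coalgebra.Repr ℂ (r.left i) (C × C) := fun i => Coalgebra.Repr.arbitrary ℂ _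
  set t : ∀ i, Coalgebra.Repr ℂ (r.right i) (C × C) := fun i => Coalgebra.Repr.arbitrary ℂ _
  have key := Coalgebra.sum_map_tmul_tmul_eq (R := ℂ) f g h x (repr := r) (a₁ := s) (a₂ := t)
  have key2 := congrArg (LinearMap.mul' ℂ A ∘ₗ LinearMap.lTensor A (LinearMap.mul' ℂ A)) key
  simp only [map_sum, LinearMap.comp_apply, LinearMap.lTensor_tmul, LinearMap.mul'_apply] at key2
  rw [conv_repr (conv f g) h x r, conv_repr f (conv g h) x r]
  calc ∑ i ∈ r.index, conv f g (r.left i) * h (r.right i)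
      = ∑ i ∈ r.index, ∑ j ∈ (s i).index,
          f ((s i).left j) * (g ((s i).right j) * h (r.right i)) := by
        refine Finset.sum_congr rfl fun i _ => ?_
        rw [conv_repr f g _ (s i), Finset.sum_mul]
        simp [mul_assoc]
    _ = ∑ i ∈ r.index, ∑ j ∈ (t i).index,
          f (r.left i) * (g ((t i).left j) * h ((t i).right j)) := key2.symm
    _ = ∑ i ∈ r.index, f (r.left i) * conv g h (r.right i) := by
        refine Finset.sum_congr rfl fun i _ => ?_
        rw [conv_repr g h _ (t i), Finset.mul_sum]

lemma conv_inv_unique {f g m : C →ₗ[ℂ] A} (h1 : conv f m = convOne) (h2 : conv m g = convOne) :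
    f = g := by
  calc f = conv f convOne := (conv_convOne f).symm
    _ = conv (conv f m) g := by rw [← h2, conv_assoc]
    _ = g := by rw [h1, convOne_conv]


variable {A : Type} [Ring A] [HopfAlgebra ℂ A]


lemma counit_tmulAA (a b : A) : Coalgebra.counit (R := ℂ) (a ⊗ₜ[ℂ] b : A ⊗[ℂ] A) =
    Coalgebra.counit (R := ℂ) a * Coalgebra.counit (R := ℂ) b := by
  simp [CoalgebraStruct.counit]; exact mul_comm _ _

/-- Repr of a pure tensor in `A ⊗ A`. -/
def tmulRepr {ι κ : Type*} (a b : A) (ra : Coalgebra.Repr ℂ a ι) (rb : Coalgebra.Repr ℂ b κ) :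
    Coalgebra.Repr ℂ (a ⊗ₜ[ℂ] b : A ⊗[ℂ] A) (ι × κ) where
  index := ra.index ×ˢ rb.index
  left := fun p => ra.left p.1 ⊗ₜ[ℂ] rb.left p.2
  right := fun p => ra.right p.1 ⊗ₜ[ℂ] rb.right p.2
  eq := by
    have : CoalgebraStruct.comul (R := ℂ) (a ⊗ₜ[ℂ] b) =
        tensorTensorTensorComm ℂ A A A A
          (CoalgebraStruct.comul (R:=ℂ) a ⊗ₜ[ℂ] CoalgebraStruct.comul (R:=ℂ) b) := rfl
    rw [this, ← ra.eq, ← rb.eq, Finset.sum_product]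
    simp [sum_tmul, tmul_sum, map_sum]
    rw [Finset.sum_comm]

/-- Repr of a product. -/
def mulRepr {ι κ : Type*} (a b : A) (ra : Coalgebra.Repr ℂ a ι) (rb : Coalgebra.Repr ℂ b κ) :
    Coalgebra.Repr ℂ (a * b) (ι × κ) where
  index := ra.index ×ˢ rb.index
  left := fun p => ra.left p.1 * rb.left p.2
  right := fun p => ra.right p.1 * rb.right p.2
  eq := by
    rw [Finset.sum_product]
    rw [show CoalgebraStruct.comul (R := ℂ) (a * b) =
      CoalgebraStruct.comul (R := ℂ) a * CoalgebraStruct.comul (R := ℂ) b from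
        Bialgebra.comul_mul a b]
    rw [← ra.eq, ← rb.eq, Finset.sum_mul_sum]
    simp [Algebra.TensorProduct.tmul_mul_tmul]

/-- antipode is anti-multiplicative. -/
theorem antipode_mul_antidistrib (a b : A) :
    antipode (R := ℂ) (a * b) = antipode (R := ℂ) b * antipode (R := ℂ) a := by
  have h1 : conv ((antipode (R := ℂ)) ∘ₗ LinearMap.mul' ℂ A) (LinearMap.mul' ℂ A) = convOne := by
    apply TensorProduct.ext'
    intro a b
    obtain ra := Coalgebra.Repr.arbitrary ℂ a
    obtain rb := Coalgebra.Repr.arbitrary ℂ b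
    rw [conv_repr _ _ _ (tmulRepr a b ra rb), convOne_apply, counit_tmulAA]
    have := HopfAlgebra.sum_antipode_mul_eq_smul (R := ℂ) (mulRepr a b ra rb)
    rw [Bialgebra.counit_mul] at this
    simpa [tmulRepr, mulRepr] using this
  have h2 : conv (LinearMap.mul' ℂ A)
      (LinearMap.mul' ℂ A ∘ₗ (TensorProduct.comm ℂ A A).toLinearMap ∘ₗ
        TensorProduct.map (antipode (R := ℂ)) (antipode (R := ℂ))) = convOne := by
    apply TensorProduct.ext'
    intro a b
    obtain ra := Coalgebra.Repr.arbitrary ℂ a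
    obtain rb := Coalgebra.Repr.arbitrary ℂ b
    rw [conv_repr _ _ _ (tmulRepr a b ra rb)]
    simp only [tmulRepr, Finset.sum_product, LinearMap.comp_apply, LinearMap.mul'_apply,
      TensorProduct.map_tmul, LinearEquiv.coe_coe, TensorProduct.comm_tmul]
    have : ∀ i ∈ ra.index, ∑ j ∈ rb.index,
        ra.left i * rb.left j * (antipode (R := ℂ) (rb.right j) * antipode (R := ℂ) (ra.right i)) =
        Coalgebra.counit (R := ℂ) b • (ra.left i * antipode (R := ℂ) (ra.right i)) := by
      intro i _
      have hb := HopfAlgebra.sum_mul_antipode_eq_smul (R := ℂ) rb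
      calc ∑ j ∈ rb.index, ra.left i * rb.left j *
            (antipode (R := ℂ) (rb.right j) * antipode (R := ℂ) (ra.right i))
          = ra.left i * (∑ j ∈ rb.index, rb.left j * antipode (R := ℂ) (rb.right j)) *
              antipode (R := ℂ) (ra.right i) := by
            rw [Finset.mul_sum, Finset.sum_mul]
            refine Finset.sum_congr rfl fun j _ => ?_
            simp [mul_assoc]
        _ = Coalgebra.counit (R := ℂ) b • (ra.left i * antipode (R := ℂ) (ra.right i)) := by
            rw [hb]; simp [smul_mul_assoc, mul_smul_comm]
    rw [Finset.sum_congr rfl this, ← Finset.smul_sum, HopfAlgebra.sum_mul_antipode_eq_smul ra,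
      convOne_apply, counit_tmulAA, smul_smul, mul_comm]
  have := conv_inv_unique h1 h2
  have := congrArg (fun f : A ⊗[ℂ] A →ₗ[ℂ] A => f (a ⊗ₜ[ℂ] b)) this
  simpa using this

def phiS : A ⊗[ℂ] (A ⊗[ℂ] (A ⊗[ℂ] A)) →ₗ[ℂ] A ⊗[ℂ] A :=
  TensorProduct.map (LinearMap.mul' ℂ A ∘ₗ TensorProduct.map (antipode (R := ℂ)) LinearMap.id)
      (LinearMap.mul' ℂ A ∘ₗ TensorProduct.map (antipode (R := ℂ)) LinearMap.id) ∘ₗ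
  (tensorTensorTensorComm ℂ A A A A).toLinearMap ∘ₗ
  (TensorProduct.map (TensorProduct.comm ℂ A A).toLinearMap LinearMap.id) ∘ₗ
  (TensorProduct.assoc ℂ A A (A ⊗[ℂ] A)).symm.toLinearMap

lemma phiS_tmul (a₁ a₂ a₃ a₄ : A) :
    phiS (a₁ ⊗ₜ[ℂ] (a₂ ⊗ₜ[ℂ] (a₃ ⊗ₜ[ℂ] a₄))) =
      (antipode (R := ℂ) a₂ * a₃) ⊗ₜ[ℂ] (antipode (R := ℂ) a₁ * a₄) := by
  simp [phiS, tensorTensorTensorComm_tmul]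

theorem comul_antipode' (x : A) :
    Coalgebra.comul (R := ℂ) (antipode (R := ℂ) x) =
      (TensorProduct.comm ℂ A A)
        (TensorProduct.map (antipode (R := ℂ)) (antipode (R := ℂ)) (Coalgebra.comul x)) := by
  suffices hmain : ((TensorProduct.comm ℂ A A).toLinearMap ∘ₗ
      TensorProduct.map (antipode (R := ℂ)) (antipode (R := ℂ)) ∘ₗ Coalgebra.comul) =
      (Coalgebra.comul ∘ₗ antipode (R := ℂ) : A →ₗ[ℂ] A ⊗[ℂ] A) by
    exact (congrArg (fun f : A →ₗ[ℂ] A ⊗[ℂ] A => f x) hmain).symm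
  apply conv_inv_unique (m := (Coalgebra.comul : A →ₗ[ℂ] A ⊗[ℂ] A))
  · -- conv g m = convOne
    ext x
    obtain r := Coalgebra.Repr.arbitrary ℂ x
    set s : ∀ i, Coalgebra.Repr ℂ (r.left i) (A × A) := fun i => Coalgebra.Repr.arbitrary ℂ _ with hs
    set t : ∀ i, Coalgebra.Repr ℂ (r.right i) (A × A) := fun i => Coalgebra.Repr.arbitrary ℂ _ with ht
    set u : ∀ i, ∀ k : A × A, Coalgebra.Repr ℂ ((t i).left k) (A × A) :=
      fun i k => Coalgebra.Repr.arbitrary ℂ _ with hu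
    set v : ∀ i, ∀ k : A × A, Coalgebra.Repr ℂ ((t i).right k) (A × A) :=
      fun i k => Coalgebra.Repr.arbitrary ℂ _ with hv
    -- the two 4-fold expansions agree
    have hE : (∑ i ∈ r.index, ∑ j ∈ (s i).index, ∑ k ∈ (t i).index,
        (s i).left j ⊗ₜ[ℂ] ((s i).right j ⊗ₜ[ℂ] ((t i).left k ⊗ₜ[ℂ] (t i).right k)))
        = ∑ i ∈ r.index, ∑ k ∈ (t i).index, ∑ j ∈ (u i k).index,
        r.left i ⊗ₜ[ℂ] ((u i k).left j ⊗ₜ[ℂ] ((u i k).right j ⊗ₜ[ℂ] (t i).right k)) := by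
      have base := Coalgebra.sum_tmul_tmul_eq (R := ℂ) r s t
      have step := congrArg (LinearMap.lTensor A (LinearMap.lTensor A
        (Coalgebra.comul (R := ℂ)))) base
      simp only [map_sum, LinearMap.lTensor_tmul] at step
      calc (∑ i ∈ r.index, ∑ j ∈ (s i).index, ∑ k ∈ (t i).index,
            (s i).left j ⊗ₜ[ℂ] ((s i).right j ⊗ₜ[ℂ] ((t i).left k ⊗ₜ[ℂ] (t i).right k)))
          = ∑ i ∈ r.index, ∑ j ∈ (s i).index,
            (s i).left j ⊗ₜ[ℂ] ((s i).right j ⊗ₜ[ℂ] Coalgebra.comul (R := ℂ) (r.right i)) := by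
            refine Finset.sum_congr rfl fun i _ => Finset.sum_congr rfl fun j _ => ?_
            rw [← (t i).eq]
            simp [tmul_sum]
        _ = ∑ i ∈ r.index, ∑ k ∈ (t i).index,
            r.left i ⊗ₜ[ℂ] ((t i).left k ⊗ₜ[ℂ] Coalgebra.comul (R := ℂ) ((t i).right k)) := step
        _ = ∑ i ∈ r.index, ∑ k ∈ (t i).index, ∑ l ∈ (v i k).index,
            r.left i ⊗ₜ[ℂ] ((t i).left k ⊗ₜ[ℂ] ((v i k).left l ⊗ₜ[ℂ] (v i k).right l)) := by
            refine Finset.sum_congr rfl fun i _ => Finset.sum_congr rfl fun k _ => ?_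
            rw [← (v i k).eq]
            simp [tmul_sum]
        _ = ∑ i ∈ r.index, ∑ k ∈ (t i).index, ∑ j ∈ (u i k).index,
            r.left i ⊗ₜ[ℂ] ((u i k).left j ⊗ₜ[ℂ] ((u i k).right j ⊗ₜ[ℂ] (t i).right k)) := by
            refine Finset.sum_congr rfl fun i _ => ?_
            have inner := Coalgebra.sum_tmul_tmul_eq (R := ℂ) (t i) (u i) (v i)
            have := congrArg (fun z : A ⊗[ℂ] (A ⊗[ℂ] A) => r.left i ⊗ₜ[ℂ] z) inner.symm
            simpa [tmul_sum] using this
    have hphi := congrArg phiS hE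
    simp only [map_sum, phiS_tmul] at hphi
    -- LHS of hphi equals conv g m x
    rw [conv_repr _ _ x r, convOne_apply]
    have hgm : ∑ i ∈ r.index,
        ((TensorProduct.comm ℂ A A).toLinearMap ∘ₗ
          TensorProduct.map (antipode (R := ℂ)) (antipode (R := ℂ)) ∘ₗ Coalgebra.comul)
            (r.left i) * Coalgebra.comul (r.right i)
        = ∑ i ∈ r.index, ∑ j ∈ (s i).index, ∑ k ∈ (t i).index,
            (antipode (R := ℂ) ((s i).right j) * (t i).left k) ⊗ₜ[ℂ]
              (antipode (R := ℂ) ((s i).left j) * (t i).right k) := by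
      refine Finset.sum_congr rfl fun i _ => ?_
      rw [LinearMap.comp_apply, LinearMap.comp_apply, ← (s i).eq, ← (t i).eq]
      simp only [map_sum, TensorProduct.map_tmul, LinearEquiv.coe_coe, TensorProduct.comm_tmul]
      rw [Finset.sum_mul_sum]
      simp [Algebra.TensorProduct.tmul_mul_tmul]
    rw [hgm, hphi]
    -- now reduce the RHS
    calc ∑ i ∈ r.index, ∑ k ∈ (t i).index, ∑ j ∈ (u i k).index,
          (antipode (R := ℂ) ((u i k).left j) * (u i k).right j) ⊗ₜ[ℂ]
            (antipode (R := ℂ) (r.left i) * (t i).right k)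
        = ∑ i ∈ r.index, ∑ k ∈ (t i).index,
            (Coalgebra.counit (R := ℂ) ((t i).left k) • (1 : A)) ⊗ₜ[ℂ]
              (antipode (R := ℂ) (r.left i) * (t i).right k) := by
          refine Finset.sum_congr rfl fun i _ => Finset.sum_congr rfl fun k _ => ?_
          rw [← sum_tmul, HopfAlgebra.sum_antipode_mul_eq_smul (u i k)]
      _ = ∑ i ∈ r.index, (1 : A) ⊗ₜ[ℂ]
            (antipode (R := ℂ) (r.left i) * r.right i) := by
          refine Finset.sum_congr rfl fun i _ => ?_
          have hc := congrArg (TensorProduct.lid ℂ A) (Coalgebra.sum_counit_tmul_eq (t i))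
          simp only [map_sum, lid_tmul, one_smul] at hc
          calc ∑ k ∈ (t i).index,
              (Coalgebra.counit (R := ℂ) ((t i).left k) • (1 : A)) ⊗ₜ[ℂ]
                (antipode (R := ℂ) (r.left i) * (t i).right k)
              = (1 : A) ⊗ₜ[ℂ] (antipode (R := ℂ) (r.left i) *
                  ∑ k ∈ (t i).index, Coalgebra.counit (R := ℂ) ((t i).left k) • (t i).right k) := by
                rw [Finset.mul_sum, tmul_sum]
                refine Finset.sum_congr rfl fun k _ => ?_
                rw [smul_tmul]
                rw [mul_smul_comm]
            _ = (1 : A) ⊗ₜ[ℂ] (antipode (R := ℂ) (r.left i) * r.right i) := by rw [hc]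
      _ = Coalgebra.counit (R := ℂ) x • (1 : A ⊗[ℂ] A) := by
          rw [← tmul_sum, HopfAlgebra.sum_antipode_mul_eq_smul r, tmul_smul,
            Algebra.TensorProduct.one_def]
  · -- conv m f = convOne
    ext x
    obtain r := Coalgebra.Repr.arbitrary ℂ x
    rw [conv_repr _ _ x r, convOne_apply]
    calc ∑ i ∈ r.index,
          Coalgebra.comul (r.left i) * (Coalgebra.comul ∘ₗ antipode (R := ℂ)) (r.right i)
        = Coalgebra.comul (R := ℂ)
            (∑ i ∈ r.index, r.left i * antipode (R := ℂ) (r.right i)) := by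
          rw [map_sum]
          exact Finset.sum_congr rfl fun i _ => (Bialgebra.comul_mul _ _).symm
      _ = Coalgebra.counit (R := ℂ) x • (1 : A ⊗[ℂ] A) := by
          rw [HopfAlgebra.sum_mul_antipode_eq_smul r, map_smul, Bialgebra.comul_one]


end AuxConv


/-- Let `H` be a Hopf `*`-algebra with invertible antipode and `B` a
braided-commutative `*`-algebra in right `H`-crossed modules with unitary action and
coaction.  Then `⊛ : B ⊗ H → H ⊗ B`, `(a ⊗ h)^⊛ = S⁻¹(h*) ⊗ a*`, is an antilinear
anti-algebra map from `B # H^{op}` to `H # B`. -/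
theorem circAst_antimul (Sinv : H →ₗ[ℂ] H)
    (hSinv₁ : ∀ h : H, Sinv (HopfAlgebra.antipode (R := ℂ) h) = h)
    (hSinv₂ : ∀ h : H, HopfAlgebra.antipode (R := ℂ) (Sinv h) = h)
    (sHH : H ⊗[ℂ] H → H ⊗[ℂ] H)
    (hsHH_add : ∀ u v : H ⊗[ℂ] H, sHH (u + v) = sHH u + sHH v)
    (hsHH_smul : ∀ (c : ℂ) (u : H ⊗[ℂ] H), sHH (c • u) = (starRingEnd ℂ c) • sHH u)
    (hsHH_tmul : ∀ x y : H, sHH (x ⊗ₜ[ℂ] y) = star x ⊗ₜ[ℂ] star y)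
    (hcomul_star : ∀ h : H, Coalgebra.comul (R := ℂ) (star h) = sHH (Coalgebra.comul (R := ℂ) h))
    (hcounit_star : ∀ h : H, Coalgebra.counit (R := ℂ) (star h) = star (Coalgebra.counit (R := ℂ) h))
    (hSstar : ∀ h : H,
      HopfAlgebra.antipode (R := ℂ) (star (HopfAlgebra.antipode (R := ℂ) (star h))) = h)
    (hact_one : ∀ b : B, act (b ⊗ₜ[ℂ] 1) = b)
    (hact_mul : ∀ (b : B) (g h : H), act (act (b ⊗ₜ[ℂ] g) ⊗ₜ[ℂ] h) = act (b ⊗ₜ[ℂ] (g * h)))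
    (hcoassoc : ∀ b : B,
      (TensorProduct.assoc ℂ B H H)
          ((TensorProduct.map coact (LinearMap.id : H →ₗ[ℂ] H)) (coact b)) =
        (TensorProduct.map (LinearMap.id : B →ₗ[ℂ] B) (Coalgebra.comul (R := ℂ))) (coact b))
    (hcounit : ∀ b : B,
      (TensorProduct.rid ℂ B)
        ((TensorProduct.map (LinearMap.id : B →ₗ[ℂ] B) (Coalgebra.counit (R := ℂ)))
          (coact b)) = b)
    (hact_alg : ∀ (a b : B) (h : H),
      act ((a * b) ⊗ₜ[ℂ] h) =
        LinearMap.mul' ℂ B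
          ((TensorProduct.map (act ∘ₗ TensorProduct.mk ℂ B H a)
              (act ∘ₗ TensorProduct.mk ℂ B H b)) (Coalgebra.comul (R := ℂ) h)))
    (hcoact_alg : ∀ a b : B, coact (a * b) = coact a * coact b)
    (hcoact_one : coact 1 = 1)
    (hYD : ∀ (a : B) (h : H), ydLHS H B act coact a h = ydRHS H B act coact a h)
    (hbc : ∀ a b : B,
      LinearMap.mul' ℂ B
        ((TensorProduct.map (LinearMap.id : B →ₗ[ℂ] B) (act ∘ₗ TensorProduct.mk ℂ B H a))
          (coact b)) = a * b)
    (sBH : B ⊗[ℂ] H → B ⊗[ℂ] H)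
    (hsBH_add : ∀ u v : B ⊗[ℂ] H, sBH (u + v) = sBH u + sBH v)
    (hsBH_smul : ∀ (c : ℂ) (u : B ⊗[ℂ] H), sBH (c • u) = (starRingEnd ℂ c) • sBH u)
    (hsBH_tmul : ∀ (b : B) (h : H), sBH (b ⊗ₜ[ℂ] h) = star b ⊗ₜ[ℂ] star h)
    (hact_star : ∀ (b : B) (h : H),
      star (act (b ⊗ₜ[ℂ] h)) = act (star b ⊗ₜ[ℂ] Sinv (star h)))
    (hcoact_star : ∀ b : B, coact (star b) = sBH (coact b))
    :
    ∀ (a b : B) (h g : H),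
      circAst H B Sinv sBH (smashMul H B act ((a ⊗ₜ[ℂ] h) ⊗ₜ[ℂ] (b ⊗ₜ[ℂ] g))) =
        smashMulR H B act
          ((circAst H B Sinv sBH (b ⊗ₜ[ℂ] g)) ⊗ₜ[ℂ]
            (circAst H B Sinv sBH (a ⊗ₜ[ℂ] h))) := by
  intro a b h g
  classical
  have hSinj : Function.Injective (HopfAlgebra.antipode (R := ℂ) (A := H)) := by
    intro x y hxy
    rw [← hSinv₁ x, hxy, hSinv₁]
  have hSinvStar : ∀ k : H, Sinv (star k) = star (HopfAlgebra.antipode (R := ℂ) k) := by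
    intro k
    apply hSinj
    rw [hSinv₂]
    have := hSstar (star k)
    rw [star_star] at this
    exact this.symm
  have hSinv_mul : ∀ x y : H, Sinv (x * y) = Sinv y * Sinv x := by
    intro x y
    apply hSinj
    rw [hSinv₂, antipode_mul_antidistrib, hSinv₂, hSinv₂]
  have hsBH_zero : sBH 0 = 0 := by
    have := hsBH_smul 0 0; simpa using this
  have hsHH_zero : sHH 0 = 0 := by
    have := hsHH_smul 0 0; simpa using this
  have hcirc : ∀ (x : B) (y : H),
      circAst H B Sinv sBH (x ⊗ₜ[ℂ] y) = Sinv (star y) ⊗ₜ[ℂ] star x := by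
    intro x y
    unfold circAst
    rw [hsBH_tmul]
    simp
  obtain r := Coalgebra.Repr.arbitrary ℂ h
  have hL1 : smashMul H B act ((a ⊗ₜ[ℂ] h) ⊗ₜ[ℂ] (b ⊗ₜ[ℂ] g)) =
      ∑ i ∈ r.index, (a * act (b ⊗ₜ[ℂ] r.left i)) ⊗ₜ[ℂ] (g * r.right i) := by
    unfold smashMul
    simp only [LinearMap.coe_comp, Function.comp_apply, LinearEquiv.coe_coe,
      tensorTensorTensorComm_tmul, TensorProduct.map_tmul, LinearMap.id_coe, id_eq]
    rw [← r.eq]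
    set_option synthInstance.maxHeartbeats 1000000 in
    simp only [sum_tmul, tmul_sum, map_sum, TensorProduct.map_tmul, LinearMap.id_coe, id_eq,
      LinearEquiv.coe_coe, TensorProduct.assoc_tmul, TensorProduct.assoc_symm_tmul,
      TensorProduct.comm_tmul, LinearMap.coe_comp, Function.comp_apply, LinearMap.mul'_apply]
  have hL : circAst H B Sinv sBH (smashMul H B act ((a ⊗ₜ[ℂ] h) ⊗ₜ[ℂ] (b ⊗ₜ[ℂ] g))) =
      ∑ i ∈ r.index, (Sinv (star g) * Sinv (star (r.right i))) ⊗ₜ[ℂ]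
        (act (star b ⊗ₜ[ℂ] Sinv (star (r.left i))) * star a) := by
    rw [hL1]
    unfold circAst
    rw [addHom_sum sBH hsBH_zero hsBH_add]
    simp only [hsBH_tmul, map_sum, TensorProduct.comm_tmul, TensorProduct.map_tmul,
      LinearMap.id_coe, id_eq, LinearEquiv.coe_coe]
    refine Finset.sum_congr rfl fun i _ => ?_
    rw [star_mul, star_mul, hSinv_mul, hact_star]
  have hx : Coalgebra.comul (R := ℂ) (Sinv (star h)) =
      ∑ i ∈ r.index, Sinv (star (r.right i)) ⊗ₜ[ℂ] Sinv (star (r.left i)) := by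
    rw [hSinvStar h, hcomul_star, comul_antipode' h, ← r.eq]
    simp only [map_sum, TensorProduct.map_tmul, TensorProduct.comm_tmul]
    rw [addHom_sum sHH hsHH_zero hsHH_add]
    simp only [hsHH_tmul, hSinvStar]
  have hR1 : smashMulR H B act
      ((Sinv (star g) ⊗ₜ[ℂ] star b) ⊗ₜ[ℂ] (Sinv (star h) ⊗ₜ[ℂ] star a)) =
      ∑ i ∈ r.index, (Sinv (star g) * Sinv (star (r.right i))) ⊗ₜ[ℂ]
        (act (star b ⊗ₜ[ℂ] Sinv (star (r.left i))) * star a) := by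
    unfold smashMulR
    simp only [LinearMap.coe_comp, Function.comp_apply, LinearEquiv.coe_coe,
      tensorTensorTensorComm_tmul, TensorProduct.map_tmul, LinearMap.id_coe, id_eq]
    rw [hx]
    set_option synthInstance.maxHeartbeats 1000000 in
    simp only [sum_tmul, tmul_sum, map_sum, TensorProduct.map_tmul, LinearMap.id_coe, id_eq,
      LinearEquiv.coe_coe, TensorProduct.assoc_tmul, TensorProduct.assoc_symm_tmul,
      TensorProduct.comm_tmul, LinearMap.coe_comp, Function.comp_apply, LinearMap.mul'_apply]
  rw [hL, hcirc b g, hcirc a h, hR1]
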